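/- Let n ≥ 2 be an integer and F(z) = 2z + zⁿ. Then the only zero of F in the closed unit disk is z = 0, and ∫_𝔻 |F′(z)|² dA(z) = (n + 4)π, where dA is two-dimensional Lebesgue measure on the open unit disk 𝔻 ⊂ ℂ. -/

import Mathlib

open Real MeasureTheory

lemma cos_int (k : ℕ) : ∫ θ in (-π)..π, Real.cos (((k:ℝ)+1)*θ) = 0 := by
  have hk : ((k:ℝ)+1) ≠ 0 := by positivity
  rw [intervalIntegral.integral_comp_mul_left (fun x => Real.cos x) hk]
  have hs : Real.sin (((k:ℝ)+1)*π) = 0 := by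
    rw [show ((k:ℝ)+1) = ((k+1:ℕ):ℝ) by push_cast; ring]; exact Real.sin_nat_mul_pi _
  simp [integral_cos, mul_neg, Real.sin_neg, hs]

noncomputable def Hfun (m : ℕ) : ℝ × ℝ → ℝ := fun p =>
  p.1 * (4 + 4*(((m:ℝ)+2)*p.1^(m+1))*Real.cos (((m:ℝ)+1)*p.2) + (((m:ℝ)+2)*p.1^(m+1))^2)

lemma inner_int (m : ℕ) (r : ℝ) :
    ∫ θ in Set.Ioo (-π) π, Hfun m (r, θ) = (2*π) * (4*r + ((m:ℝ)+2)^2 * r^(2*m+3)) := by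
  rw [← MeasureTheory.integral_Ioc_eq_integral_Ioo,
    ← intervalIntegral.integral_of_le (by linarith [Real.pi_pos] : -π ≤ π)]
  unfold Hfun
  have h1 : ∀ θ : ℝ, r * (4 + 4*(((m:ℝ)+2)*r^(m+1))*Real.cos (((m:ℝ)+1)*θ) + (((m:ℝ)+2)*r^(m+1))^2)
      = (4*r + ((m:ℝ)+2)^2 * r^(2*m+3)) + (4*r*(((m:ℝ)+2)*r^(m+1))) * Real.cos (((m:ℝ)+1)*θ) := by
    intro θ; rw [show 2*m+3 = (m+1)+(m+1)+1 by ring]; ring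
  simp only [h1]
  have hcos : IntervalIntegrable (fun θ : ℝ => Real.cos (((m:ℝ)+1)*θ)) volume (-π) π :=
    (Real.continuous_cos.comp (continuous_const.mul continuous_id)).intervalIntegrable _ _
  rw [intervalIntegral.integral_add intervalIntegrable_const (hcos.const_mul _),
    intervalIntegral.integral_const_mul, cos_int m]
  simp; ring

lemma Hfun_cont (m : ℕ) : Continuous (Hfun m) := by
  unfold Hfun; fun_prop

lemma prod_int (m : ℕ) :
    ∫ p in Set.Ioo (0:ℝ) 1 ×ˢ Set.Ioo (-π) π, Hfun m p = ((m:ℝ)+6)*π := by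
  have hInt : IntegrableOn (Hfun m) (Set.Ioo (0:ℝ) 1 ×ˢ Set.Ioo (-π) π) (volume.prod volume) := by
    have : IntegrableOn (Hfun m) (Set.Icc (0:ℝ) 1 ×ˢ Set.Icc (-π) π) (volume.prod volume) := by
      exact ContinuousOn.integrableOn_compact
        ((isCompact_Icc (a := (0:ℝ)) (b := 1)).prod (isCompact_Icc (a := -π) (b := π)))
        ((Hfun_cont m).continuousOn)
    exact this.mono_set (Set.prod_mono Set.Ioo_subset_Icc_self Set.Ioo_subset_Icc_self)
  rw [MeasureTheory.Measure.volume_eq_prod, MeasureTheory.setIntegral_prod _ hInt]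
  simp only [inner_int]
  rw [MeasureTheory.integral_const_mul, ← MeasureTheory.integral_Ioc_eq_integral_Ioo,
    ← intervalIntegral.integral_of_le (by norm_num : (0:ℝ) ≤ 1)]
  have h4 : IntervalIntegrable (fun r : ℝ => 4*r) volume 0 1 :=
    (continuous_const.mul continuous_id).intervalIntegrable _ _
  have h5 : IntervalIntegrable (fun r : ℝ => ((m:ℝ)+2)^2 * r^(2*m+3)) volume 0 1 :=
    (continuous_const.mul (continuous_pow _)).intervalIntegrable _ _
  rw [intervalIntegral.integral_add h4 h5, intervalIntegral.integral_const_mul,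
    intervalIntegral.integral_const_mul, integral_pow, integral_id]
  have : ((2*m+3:ℕ):ℝ) + 1 = 2*((m:ℝ)+2) := by push_cast; ring
  rw [this]
  have hm : ((m:ℝ)+2) ≠ 0 := by positivity
  field_simp
  ring

lemma key_alg (m : ℕ) (p : ℝ × ℝ) :
    ‖(2:ℂ) + ((m:ℂ)+2) * (Complex.polarCoord.symm p)^(m+1)‖^2
      = 4 + 4*(((m:ℝ)+2)*p.1^(m+1))*Real.cos (((m:ℝ)+1)*p.2)
        + (((m:ℝ)+2)*p.1^(m+1))^2 := by
  rw [Complex.polarCoord_symm_apply]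
  set r := p.1; set θ := p.2
  have hexp : ((Real.cos θ : ℂ) + (Real.sin θ : ℂ) * Complex.I) = Complex.exp (θ * Complex.I) := by
    rw [Complex.exp_mul_I]; push_cast [Complex.ofReal_cos, Complex.ofReal_sin]; ring
  have h1 : ((r:ℂ) * ((Real.cos θ:ℂ) + (Real.sin θ:ℂ) * Complex.I))^(m+1)
      = ((r^(m+1) : ℝ) : ℂ) * ((Real.cos (((m:ℝ)+1)*θ):ℂ) + (Real.sin (((m:ℝ)+1)*θ):ℂ) * Complex.I) := by
    rw [hexp, mul_pow, ← Complex.exp_nat_mul,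
      show ((m+1:ℕ):ℂ) * (θ * Complex.I) = ((((m:ℝ)+1)*θ : ℝ):ℂ) * Complex.I by push_cast; ring,
      Complex.exp_mul_I]
    push_cast [Complex.ofReal_cos, Complex.ofReal_sin]
    ring
  rw [h1,
    show (2:ℂ) + ((m:ℂ)+2) * (((r^(m+1) : ℝ) : ℂ) * ((Real.cos (((m:ℝ)+1)*θ):ℂ) + (Real.sin (((m:ℝ)+1)*θ):ℂ) * Complex.I))
      = ((2 + ((m:ℝ)+2)*r^(m+1)*Real.cos (((m:ℝ)+1)*θ) : ℝ):ℂ) + ((((m:ℝ)+2)*r^(m+1)*Real.sin (((m:ℝ)+1)*θ) : ℝ):ℂ) * Complex.I by push_cast; ring,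
    Complex.sq_norm, Complex.normSq_add_mul_I]
  nlinarith [Real.sin_sq_add_cos_sq (((m:ℝ)+1)*θ)]

/-- For `F(z) = 2z + zⁿ`, `n ≥ 2`: the only zero of `F` in the closed unit disk is `z = 0`,
and the Dirichlet integral of `F` over the unit disk equals `(n+4)π`. -/
theorem dirichlet_energy_two_z_plus_zn (n : ℕ) (hn : 2 ≤ n) (F : ℂ → ℂ)
    (hF : ∀ z, F z = 2 * z + z ^ n) :
    (∀ z : ℂ, ‖z‖ ≤ 1 → (F z = 0 ↔ z = 0)) ∧
      (∫ z in Metric.ball (0:ℂ) 1, ‖deriv F z‖ ^ 2) = (n + 4) * π := by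
  obtain ⟨m, rfl⟩ : ∃ m, n = m + 2 := ⟨n - 2, by omega⟩
  constructor
  · intro z hz
    constructor
    · intro h0
      have h : 2 * z + z ^ (m+2) = 0 := by rw [← hF z, h0]
      have hfac : z * (2 + z^(m+1)) = 0 := by
        rw [show z * (2 + z^(m+1)) = 2*z + z^(m+2) by ring, h]
      rcases mul_eq_zero.1 hfac with h1 | h2
      · exact h1
      · exfalso
        have hz2 : z^(m+1) = -2 := by linear_combination h2
        have : ‖z^(m+1)‖ = 2 := by rw [hz2]; simp
        rw [norm_pow] at this
        have hle : ‖z‖^(m+1) ≤ 1 := pow_le_one₀ (norm_nonneg z) hz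
        linarith
    · intro h0
      rw [hF, h0]
      simp
  · have hFe : F = fun z => 2*z + z^(m+2) := funext hF
    have hderiv : ∀ z : ℂ, deriv F z = 2 + ((m:ℂ)+2) * z^(m+1) := by
      intro z
      have h : HasDerivAt F ((2:ℂ)*1 + ((m+2:ℕ):ℂ)*z^(m+2-1)) z := by
        rw [hFe]
        exact ((hasDerivAt_id z).const_mul 2).add (hasDerivAt_pow (m+2) z)
      have h2 : (2:ℂ)*1 + ((m+2:ℕ):ℂ)*z^(m+2-1) = 2 + ((m:ℂ)+2)*z^(m+1) := by
        push_cast; norm_num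
      rw [h2] at h
      exact h.deriv
    simp_rw [hderiv]
    set g : ℂ → ℝ := fun z => ‖(2:ℂ) + ((m:ℂ)+2)*z^(m+1)‖^2 with hg
    rw [← MeasureTheory.integral_indicator measurableSet_ball,
      ← Complex.integral_comp_polarCoord_symm (Set.indicator (Metric.ball (0:ℂ) 1) g)]
    have hsub : Set.Ioo (0:ℝ) 1 ×ˢ Set.Ioo (-π) π ⊆ polarCoord.target := by
      rw [polarCoord_target]
      exact Set.prod_mono Set.Ioo_subset_Ioi_self subset_rfl
    have key : ∀ p ∈ polarCoord.target,
        p.1 • (Set.indicator (Metric.ball (0:ℂ) 1) g (Complex.polarCoord.symm p))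
          = Set.indicator (Set.Ioo (0:ℝ) 1 ×ˢ Set.Ioo (-π) π) (Hfun m) p := by
      intro p hp
      rw [polarCoord_target] at hp
      simp only [Set.mem_prod, Set.mem_Ioi, Set.mem_Ioo] at hp
      have hp1 : 0 < p.1 := hp.1
      have hmem : Complex.polarCoord.symm p ∈ Metric.ball (0:ℂ) 1 ↔ p.1 < 1 := by
        rw [Metric.mem_ball, dist_zero_right, Complex.norm_polarCoord_symm,
          abs_of_pos hp1]
      by_cases h : p.1 < 1
      · rw [Set.indicator_of_mem (hmem.2 h), Set.indicator_of_mem (Set.mem_prod.2 ⟨Set.mem_Ioo.2 ⟨hp1, h⟩, Set.mem_Ioo.2 hp.2⟩)]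
        rw [smul_eq_mul, hg]
        simp only
        rw [key_alg]
        rfl
      · rw [Set.indicator_of_notMem (fun hm' => h (hmem.1 hm')),
          Set.indicator_of_notMem (fun hm' => h (Set.mem_Ioo.1 hm'.1).2)]
        simp
    rw [MeasureTheory.setIntegral_congr_fun polarCoord.open_target.measurableSet key,
      MeasureTheory.setIntegral_indicator (measurableSet_Ioo.prod measurableSet_Ioo),
      Set.inter_eq_self_of_subset_right hsub, prod_int]
    push_cast; ring
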